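/- arXiv:2009.13257 — 5 statements merged into one kernel-verified Lean document; each statement's English description precedes it below -/
import Mathlib

section
/- Let F be a set family on a ground set V and let J be an inclusion-minimal set of edges (pairs of elements of V) such that every set A ∈ F is covered by some edge of J (an edge covers A if exactly one of its endpoints lies in A). Then the graph (V, J) contains no cycle, i.e., J is a forest. -/
/-- An edge (unordered pair) covers a set `A` if exactly one of its endpoints lies in `A`. -/
def edgeCovers {V : Type*} (e : Sym2 V) (A : Set V) : Prop :=
  ∃ u v : V, e = s(u, v) ∧ u ∈ A ∧ v ∉ A

/-- An edge set `J` covers a set family `F` if every member of `F` is covered by some edge. -/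
def coversFamily {V : Type*} (J : Set (Sym2 V)) (F : Set (Set V)) : Prop :=
  ∀ A ∈ F, ∃ e ∈ J, edgeCovers e A

lemma walk_cross {V : Type*} {G : SimpleGraph V} (A : Set V) :
    ∀ {u v : V} (p : G.Walk u v), u ∈ A → v ∉ A → ∃ e ∈ p.edges, edgeCovers e A := by
  intro u v p
  induction p with
  | nil => intro h h'; exact absurd h h'
  | @cons a b c h p ih =>
    intro ha hc
    by_cases hb : b ∈ A
    · obtain ⟨e, he, hcov⟩ := ih hb hc
      exact ⟨e, by simp [he], hcov⟩
    · exact ⟨s(a, b), by simp, a, b, rfl, ha, hb⟩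

/-- Any inclusion-minimal cover of a set family is a forest. -/
theorem minimal_cover_is_forest {V : Type*} (F : Set (Set V)) (J : Set (Sym2 V))
    (hJ : coversFamily J F)
    (hmin : ∀ J' : Set (Sym2 V), J' ⊂ J → ¬ coversFamily J' F) :
    (SimpleGraph.fromEdgeSet J).IsAcyclic := by
  set G := SimpleGraph.fromEdgeSet J with hG
  rw [SimpleGraph.isAcyclic_iff_forall_adj_isBridge]
  intro v w hadj
  rw [SimpleGraph.isBridge_iff]
  intro hreach
  obtain ⟨p⟩ := hreach
  have hvw : v ≠ w := hadj.ne
  have heJ : s(v, w) ∈ J := by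
    have := hadj
    rw [hG, SimpleGraph.fromEdgeSet_adj] at this
    exact this.1
  set J' : Set (Sym2 V) := J \ {s(v, w)} with hJ'
  have hsub : J' ⊂ J := by
    constructor
    · exact Set.diff_subset
    · intro hsub'
      have := hsub' heJ
      simp [hJ'] at this
  apply hmin J' hsub
  intro A hA
  obtain ⟨e, heJ0, hcov⟩ := hJ A hA
  by_cases hee : e = s(v, w)
  · -- need another edge, from the walk p in deleteEdges
    subst hee
    obtain ⟨a, b, hab, haA, hbA⟩ := hcov
    have key : ∃ e' ∈ (G.deleteEdges {s(v, w)}).edgeSet, edgeCovers e' A := by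
      rw [Sym2.eq_iff] at hab
      rcases hab with ⟨rfl, rfl⟩ | ⟨rfl, rfl⟩
      · obtain ⟨e', he', hc⟩ := walk_cross A p haA hbA
        exact ⟨e', p.edges_subset_edgeSet he', hc⟩
      · obtain ⟨e', he', hc⟩ := walk_cross A p.reverse haA hbA
        exact ⟨e', p.reverse.edges_subset_edgeSet he', hc⟩
    obtain ⟨e', he', hc⟩ := key
    rw [SimpleGraph.edgeSet_deleteEdges] at he'
    refine ⟨e', ?_, hc⟩
    have heG : e' ∈ G.edgeSet := he'.1
    rw [hG, SimpleGraph.edgeSet_fromEdgeSet] at heG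
    exact ⟨heG.1, he'.2⟩
  · exact ⟨e, ⟨heJ0, hee⟩, hcov⟩
end

section
/- Let g be a minimal transversal of a symmetric skew-supermodular set function p on S with τ(p) the minimum size of a p-cover. Then there exists a p-cover J of size τ(p) such that for every v ∈ S: d_J(v) ≥ g(v) if g(v) ≥ 1, and d_J(v) = 0 if g(v) = 0. -/
set_option linter.unusedSectionVars false
set_option maxHeartbeats 1000000


open Finset

/-- The number of edges of the multiset `J` with exactly one endpoint in `A`. -/
def cutDeg {S : Type*} [DecidableEq S] (J : Multiset (S × S)) (A : Finset S) : ℕ :=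
  (J.filter (fun e => ¬((e.1 ∈ A) ↔ (e.2 ∈ A)))).card

/-- `J` covers the set function `p`. -/
def CoversFn {S : Type*} [Fintype S] [DecidableEq S]
    (J : Multiset (S × S)) (p : Finset S → ℤ) : Prop :=
  ∀ A : Finset S, p A ≤ (cutDeg J A : ℤ)

def SkewSupermodular {S : Type*} [Fintype S] [DecidableEq S] (p : Finset S → ℤ) : Prop :=
  ∀ A B : Finset S,
    p A + p B ≤ p (A ∩ B) + p (A ∪ B) ∨ p A + p B ≤ p (A \ B) + p (B \ A)

def SymmetricFn {S : Type*} [Fintype S] [DecidableEq S] (p : Finset S → ℤ) : Prop :=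
  ∀ A : Finset S, p A = p (Finset.univ \ A)

/-- `g` is a `p`-transversal. -/
def IsTransversal {S : Type*} [Fintype S] [DecidableEq S] (p : Finset S → ℤ) (g : S → ℕ) : Prop :=
  ∀ A : Finset S, p A ≤ ∑ v ∈ A, (g v : ℤ)

namespace BF
variable {S : Type*} [Fintype S] [DecidableEq S]

def xing (e : S × S) (A : Finset S) : ℕ := if (e.1 ∈ A) ↔ (e.2 ∈ A) then 0 else 1

lemma cutDeg_cons (e : S × S) (J : Multiset (S × S)) (A : Finset S) :
    cutDeg (e ::ₘ J) A = xing e A + cutDeg J A := by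
  unfold cutDeg xing
  rw [Multiset.filter_cons]
  by_cases h : (e.1 ∈ A) ↔ (e.2 ∈ A) <;> simp [h] <;> omega

lemma cutDeg_erase {e : S × S} {J : Multiset (S × S)} (he : e ∈ J) (A : Finset S) :
    cutDeg J A = xing e A + cutDeg (J.erase e) A := by
  conv_lhs => rw [← Multiset.cons_erase he]
  exact cutDeg_cons e _ A

lemma xing_compl (e : S × S) (A : Finset S) : xing e (univ \ A) = xing e A := by
  unfold xing
  by_cases h1 : e.1 ∈ A <;> by_cases h2 : e.2 ∈ A <;> simp [h1, h2]

lemma cutDeg_compl (J : Multiset (S × S)) (A : Finset S) :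
    cutDeg J (univ \ A) = cutDeg J A := by
  induction J using Multiset.induction_on with
  | empty => rfl
  | cons e J ih => rw [cutDeg_cons, cutDeg_cons, ih, xing_compl]

lemma xing_submod (e : S × S) (A B : Finset S) :
    xing e (A ∩ B) + xing e (A ∪ B) ≤ xing e A + xing e B := by
  unfold xing
  by_cases h1 : e.1 ∈ A <;> by_cases h2 : e.2 ∈ A <;> by_cases h3 : e.1 ∈ B <;>
    by_cases h4 : e.2 ∈ B <;> simp [h1, h2, h3, h4]

lemma xing_posimod (e : S × S) (A B : Finset S) :
    xing e (A \ B) + xing e (B \ A) ≤ xing e A + xing e B := by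
  unfold xing
  by_cases h1 : e.1 ∈ A <;> by_cases h2 : e.2 ∈ A <;> by_cases h3 : e.1 ∈ B <;>
    by_cases h4 : e.2 ∈ B <;> simp [h1, h2, h3, h4]

lemma cutDeg_submod (J : Multiset (S × S)) (A B : Finset S) :
    cutDeg J (A ∩ B) + cutDeg J (A ∪ B) ≤ cutDeg J A + cutDeg J B := by
  induction J using Multiset.induction_on with
  | empty => simp [cutDeg]
  | cons e J ih =>
    simp only [cutDeg_cons]
    have := xing_submod e A B
    omega

lemma cutDeg_posimod (J : Multiset (S × S)) (A B : Finset S) :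
    cutDeg J (A \ B) + cutDeg J (B \ A) ≤ cutDeg J A + cutDeg J B := by
  induction J using Multiset.induction_on with
  | empty => simp [cutDeg]
  | cons e J ih =>
    simp only [cutDeg_cons]
    have := xing_posimod e A B
    omega

lemma cutDeg_posimod_strong {u v : S} {J : Multiset (S × S)} (he : (u, v) ∈ J)
    {A B : Finset S} (huA : u ∈ A) (huB : u ∈ B) (hvA : v ∉ A) (hvB : v ∉ B) :
    cutDeg J (A \ B) + cutDeg J (B \ A) + 2 ≤ cutDeg J A + cutDeg J B := by
  rw [cutDeg_erase he A, cutDeg_erase he B, cutDeg_erase he (A \ B), cutDeg_erase he (B \ A)]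
  have h1 : xing (u, v) A = 1 := by simp [xing, huA, hvA]
  have h2 : xing (u, v) B = 1 := by simp [xing, huB, hvB]
  have h3 : xing (u, v) (A \ B) = 0 := by simp [xing, mem_sdiff, huB, hvA]
  have h4 : xing (u, v) (B \ A) = 0 := by simp [xing, mem_sdiff, huA, hvB]
  have := cutDeg_posimod (J.erase (u, v)) A B
  omega

lemma one_le_cutDeg {e : S × S} {J : Multiset (S × S)} (he : e ∈ J) {A : Finset S}
    (hx : xing e A = 1) : 1 ≤ cutDeg J A := by
  rw [cutDeg_erase he A, hx]; omega

lemma xing_eq_one_iff (e : S × S) (A : Finset S) :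
    xing e A = 1 ↔ ¬((e.1 ∈ A) ↔ (e.2 ∈ A)) := by
  unfold xing; by_cases h : (e.1 ∈ A) ↔ (e.2 ∈ A) <;> simp [h] <;> omega

variable {S : Type*} [Fintype S] [DecidableEq S]

lemma sum_cast_update (g : S → ℕ) (w : S) (c : ℕ) (A : Finset S) :
    ∑ x ∈ A, ((Function.update g w c) x : ℤ) =
      ∑ x ∈ A, (g x : ℤ) + (if w ∈ A then (c : ℤ) - g w else 0) := by
  have h : ∀ x ∈ A, ((Function.update g w c) x : ℤ) =
      (g x : ℤ) + (if x = w then (c : ℤ) - (g w : ℤ) else 0) := by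
    intro x _
    by_cases hx : x = w
    · subst hx; simp [Function.update_self]
    · simp [Function.update_of_ne hx, hx]
  rw [Finset.sum_congr rfl h, Finset.sum_add_distrib, Finset.sum_ite_eq' A w]

lemma not_transversal_of_witness (q : Finset S → ℤ) (h : S → ℕ) {w : S} {A : Finset S}
    (hwA : w ∈ A) (hA : ∑ x ∈ A, (h x : ℤ) ≤ q A) (hw : 1 ≤ h w) :
    ¬ IsTransversal q (Function.update h w (h w - 1)) := by
  intro ht
  have h1 := ht A
  rw [sum_cast_update] at h1
  simp only [hwA, if_true] at h1
  have h2 : ((h w - 1 : ℕ) : ℤ) = (h w : ℤ) - 1 := by omega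
  linarith

lemma exists_tight (p : Finset S → ℤ) (g : S → ℕ) (hg : IsTransversal p g)
    (hmin : ∀ v : S, 1 ≤ g v → ¬ IsTransversal p (Function.update g v (g v - 1)))
    {w : S} (hw : 1 ≤ g w) : ∃ A, w ∈ A ∧ p A = ∑ x ∈ A, (g x : ℤ) := by
  have h := hmin w hw
  unfold IsTransversal at h
  push_neg at h
  obtain ⟨A, hA⟩ := h
  rw [sum_cast_update] at hA
  by_cases hwA : w ∈ A
  · refine ⟨A, hwA, ?_⟩
    simp only [hwA, if_true] at hA
    have h2 : ((g w - 1 : ℕ) : ℤ) = (g w : ℤ) - 1 := by omega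
    have := hg A
    linarith
  · exfalso
    simp only [hwA, if_false] at hA
    have := hg A
    linarith

lemma exists_supp_mem {g : S → ℕ} {A : Finset S} (h : 1 ≤ ∑ x ∈ A, (g x : ℤ)) :
    ∃ u ∈ A, 1 ≤ g u := by
  by_contra hc
  push_neg at hc
  have : ∑ x ∈ A, (g x : ℤ) = 0 := by
    apply Finset.sum_eq_zero
    intro x hx
    have := hc x hx
    omega
  omega

lemma single_le_sum_g (g : S → ℕ) {A : Finset S} {w : S} (hw : w ∈ A) :
    (g w : ℤ) ≤ ∑ x ∈ A, (g x : ℤ) :=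
  Finset.single_le_sum (f := fun x => (g x : ℤ)) (fun i _ => by positivity) hw

lemma uncross_tight (p : Finset S → ℤ) (hskew : SkewSupermodular p) (g : S → ℕ)
    (hg : IsTransversal p g) {T D : Finset S}
    (hT : p T = ∑ x ∈ T, (g x : ℤ)) (hD : p D = ∑ x ∈ D, (g x : ℤ))
    {s : S} (hsT : s ∈ T) (hsD : s ∈ D) (hs : 1 ≤ g s) :
    p (T ∪ D) = ∑ x ∈ T ∪ D, (g x : ℤ) ∧ p (T ∩ D) = ∑ x ∈ T ∩ D, (g x : ℤ) := by
  have hmu : ∑ x ∈ T ∪ D, (g x : ℤ) + ∑ x ∈ T ∩ D, (g x : ℤ)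
      = ∑ x ∈ T, (g x : ℤ) + ∑ x ∈ D, (g x : ℤ) := Finset.sum_union_inter
  rcases hskew T D with h | h
  · have h1 := hg (T ∩ D)
    have h2 := hg (T ∪ D)
    constructor <;> linarith
  · exfalso
    have hmT : ∑ x ∈ T ∩ D, (g x : ℤ) + ∑ x ∈ T \ D, (g x : ℤ) = ∑ x ∈ T, (g x : ℤ) :=
      Finset.sum_inter_add_sum_sdiff T D _
    have hmD : ∑ x ∈ D ∩ T, (g x : ℤ) + ∑ x ∈ D \ T, (g x : ℤ) = ∑ x ∈ D, (g x : ℤ) :=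
      Finset.sum_inter_add_sum_sdiff D T _
    have hDT : ∑ x ∈ D ∩ T, (g x : ℤ) = ∑ x ∈ T ∩ D, (g x : ℤ) := by rw [Finset.inter_comm]
    have hsmem : s ∈ T ∩ D := Finset.mem_inter.mpr ⟨hsT, hsD⟩
    have h3 := single_le_sum_g g hsmem
    have h4 := hg (T \ D)
    have h5 := hg (D \ T)
    have hs' : (1 : ℤ) ≤ (g s : ℤ) := by exact_mod_cast hs
    linarith
lemma residual_transversal (p : Finset S → ℤ) (hskew : SkewSupermodular p)
    (g : S → ℕ) (hg : IsTransversal p g)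
    (hmin : ∀ v : S, 1 ≤ g v → ¬ IsTransversal p (Function.update g v (g v - 1)))
    {u v : S} (hu : 1 ≤ g u) (hv : 1 ≤ g v) (huv : u ≠ v) :
    ∃ g' : S → ℕ,
      IsTransversal (fun A => p A - (xing (u, v) A : ℤ)) g' ∧
      (∀ w : S, 1 ≤ g' w → ¬ IsTransversal (fun A => p A - (xing (u, v) A : ℤ))
        (Function.update g' w (g' w - 1))) ∧
      (∀ w : S, w ≠ u → w ≠ v → g' w = g w) ∧
      g' u ≤ g u ∧ g u ≤ g' u + 1 ∧ g' v ≤ g v ∧ g v ≤ g' v + 1 := by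
  set p' : Finset S → ℤ := fun A => p A - (xing (u, v) A : ℤ) with hp'
  -- basic xing values
  have hx00 : ∀ A : Finset S, u ∉ A → v ∉ A → xing (u, v) A = 0 := by
    intro A h1 h2; simp [xing, h1, h2]
  have hx11 : ∀ A : Finset S, u ∈ A → v ∈ A → xing (u, v) A = 0 := by
    intro A h1 h2; simp [xing, h1, h2]
  have hx10 : ∀ A : Finset S, u ∈ A → v ∉ A → xing (u, v) A = 1 := by
    intro A h1 h2; simp [xing, h1, h2]
  have hx01 : ∀ A : Finset S, u ∉ A → v ∈ A → xing (u, v) A = 1 := by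
    intro A h1 h2; simp [xing, h1, h2]
  by_cases hc : ∃ D, u ∈ D ∧ v ∈ D ∧ p D = ∑ x ∈ D, (g x : ℤ)
  · -- Case c : a tight set contains both u and v; take g' = g
    obtain ⟨D, huD, hvD, hD⟩ := hc
    refine ⟨g, ?_, ?_, fun w _ _ => rfl, le_refl _, by omega, le_refl _, by omega⟩
    · intro A
      have h1 := hg A
      have h2 : (0 : ℤ) ≤ (xing (u, v) A : ℤ) := by positivity
      simp only [hp']
      linarith
    · intro w hw
      obtain ⟨T, hwT, hT⟩ := exists_tight p g hg hmin hw
      by_cases huT : u ∈ T <;> by_cases hvT : v ∈ T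
      · exact not_transversal_of_witness p' g hwT (by simp [hp', hx11 T huT hvT, hT]) hw
      · -- u ∈ T, v ∉ T : uncross with D at u
        have hun := (uncross_tight p hskew g hg hT hD huT huD hu).1
        have hwU : w ∈ T ∪ D := Finset.mem_union_left _ hwT
        refine not_transversal_of_witness p' g hwU ?_ hw
        have : xing (u, v) (T ∪ D) = 0 :=
          hx11 _ (Finset.mem_union_left _ huT) (Finset.mem_union_right _ hvD)
        simp [hp', this, hun]
      · -- v ∈ T, u ∉ T : uncross with D at v
        have hun := (uncross_tight p hskew g hg hT hD hvT hvD hv).1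
        have hwU : w ∈ T ∪ D := Finset.mem_union_left _ hwT
        refine not_transversal_of_witness p' g hwU ?_ hw
        have : xing (u, v) (T ∪ D) = 0 :=
          hx11 _ (Finset.mem_union_right _ huD) (Finset.mem_union_left _ hvT)
        simp [hp', this, hun]
      · exact not_transversal_of_witness p' g hwT (by simp [hp', hx00 T huT hvT, hT]) hw
  · by_cases hb : ∃ D, u ∈ D ∧ v ∈ D ∧ p D = ∑ x ∈ D, (g x : ℤ) - 1
    · -- Case b : minimum deficiency of sets containing u,v is 1 ; take g' = g - 1_u
      obtain ⟨D, huD, hvD, hD⟩ := hb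
      set g' : S → ℕ := Function.update g u (g u - 1) with hg'
      have hg'u : g' u = g u - 1 := by simp [hg']
      have hg'w : ∀ w, w ≠ u → g' w = g w := by
        intro w hwu; simp [hg', Function.update_of_ne hwu]
      have hsum : ∀ A : Finset S,
          ∑ x ∈ A, (g' x : ℤ) = ∑ x ∈ A, (g x : ℤ) - (if u ∈ A then 1 else 0) := by
        intro A
        rw [hg', sum_cast_update]
        have : ((g u - 1 : ℕ) : ℤ) = (g u : ℤ) - 1 := by omega
        split_ifs <;> simp [this] <;> ring
      have hne : ∀ A : Finset S, u ∈ A → v ∈ A → p A ≤ ∑ x ∈ A, (g x : ℤ) - 1 := by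
        intro A h1 h2
        have h3 := hg A
        have h4 : p A ≠ ∑ x ∈ A, (g x : ℤ) := fun h => hc ⟨A, h1, h2, h⟩
        omega
      refine ⟨g', ?_, ?_, fun w hwu _ => hg'w w hwu, by omega, by omega,
        by rw [hg'w v (Ne.symm huv)], by rw [hg'w v (Ne.symm huv)]; omega⟩
      · intro A
        rw [hsum]
        by_cases h1 : u ∈ A <;> by_cases h2 : v ∈ A
        · have := hne A h1 h2
          simp only [hp', hx11 A h1 h2, h1, if_true]
          push_cast; linarith
        · have := hg A
          simp only [hp', hx10 A h1 h2, h1, if_true]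
          push_cast; linarith
        · have := hg A
          have h3 : (0:ℤ) ≤ (xing (u,v) A : ℤ) := by positivity
          simp only [hp', h1, if_false]
          linarith
        · have := hg A
          have h3 : (0:ℤ) ≤ (xing (u,v) A : ℤ) := by positivity
          simp only [hp', h1, if_false]
          linarith
      · intro w hw
        have hDwit : ∑ x ∈ D, (g' x : ℤ) ≤ p' D := by
          rw [hsum]
          simp [hp', hx11 D huD hvD, huD, hD]
        by_cases hwD : w ∈ D
        · exact not_transversal_of_witness p' g' hwD hDwit hw
        · have hwu : w ≠ u := fun h => hwD (h ▸ huD)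
          have hwv : w ≠ v := fun h => hwD (h ▸ hvD)
          have hgw : 1 ≤ g w := by rw [← hg'w w hwu]; exact hw
          obtain ⟨T, hwT, hT⟩ := exists_tight p g hg hmin hgw
          by_cases huT : u ∈ T <;> by_cases hvT : v ∈ T
          · exact absurd hT (fun h => hc ⟨T, huT, hvT, h⟩)
          · -- u ∈ T, v ∉ T : xing = 1
            refine not_transversal_of_witness p' g' hwT ?_ hw
            rw [hsum]
            simp [hp', hx10 T huT hvT, huT, hT]
          · -- v ∈ T, u ∉ T : uncross T with D
            rcases hskew T D with h | h
            · have hmu : ∑ x ∈ T ∪ D, (g x : ℤ) + ∑ x ∈ T ∩ D, (g x : ℤ)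
                  = ∑ x ∈ T, (g x : ℤ) + ∑ x ∈ D, (g x : ℤ) := Finset.sum_union_inter
              have h1 := hg (T ∩ D)
              have h2 := hg (T ∪ D)
              have huU : u ∈ T ∪ D := Finset.mem_union_right _ huD
              have hvU : v ∈ T ∪ D := Finset.mem_union_left _ hvT
              have h3 := hne (T ∪ D) huU hvU
              -- conclude p (T∪D) = m(T∪D) - 1
              have h4 : p (T ∪ D) = ∑ x ∈ T ∪ D, (g x : ℤ) - 1 := by linarith
              refine not_transversal_of_witness (A := T ∪ D) p' g' (Finset.mem_union_left _ hwT) ?_ hw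
              rw [hsum]
              simp [hp', hx11 _ huU hvU, huU, h4]
            · exfalso
              have hmT : ∑ x ∈ T ∩ D, (g x : ℤ) + ∑ x ∈ T \ D, (g x : ℤ)
                  = ∑ x ∈ T, (g x : ℤ) := Finset.sum_inter_add_sum_sdiff T D _
              have hmD : ∑ x ∈ D ∩ T, (g x : ℤ) + ∑ x ∈ D \ T, (g x : ℤ)
                  = ∑ x ∈ D, (g x : ℤ) := Finset.sum_inter_add_sum_sdiff D T _
              have hDT : ∑ x ∈ D ∩ T, (g x : ℤ) = ∑ x ∈ T ∩ D, (g x : ℤ) := by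
                rw [Finset.inter_comm]
              have h3 := single_le_sum_g g (Finset.mem_inter.mpr ⟨hvT, hvD⟩)
              have h4 := hg (T \ D)
              have h5 := hg (D \ T)
              have hv' : (1 : ℤ) ≤ (g v : ℤ) := by exact_mod_cast hv
              linarith
          · refine not_transversal_of_witness p' g' hwT ?_ hw
            rw [hsum]
            simp [hp', hx00 T huT hvT, huT, hT]
    · -- Case a : all sets containing u,v have deficiency ≥ 2 ; take g' = g - 1_u - 1_v
      have ha : ∀ A : Finset S, u ∈ A → v ∈ A → p A ≤ ∑ x ∈ A, (g x : ℤ) - 2 := by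
        intro A h1 h2
        have h3 := hg A
        have h4 : p A ≠ ∑ x ∈ A, (g x : ℤ) := fun h => hc ⟨A, h1, h2, h⟩
        have h5 : p A ≠ ∑ x ∈ A, (g x : ℤ) - 1 := fun h => hb ⟨A, h1, h2, h⟩
        omega
      set g' : S → ℕ := Function.update (Function.update g u (g u - 1)) v (g v - 1) with hg'
      have hg'u : g' u = g u - 1 := by
        simp [hg', Function.update_of_ne huv]
      have hg'v : g' v = g v - 1 := by simp [hg']
      have hg'w : ∀ w, w ≠ u → w ≠ v → g' w = g w := by
        intro w hwu hwv
        simp [hg', Function.update_of_ne hwv, Function.update_of_ne hwu]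
      have hsum : ∀ A : Finset S,
          ∑ x ∈ A, (g' x : ℤ) = ∑ x ∈ A, (g x : ℤ)
            - (if u ∈ A then 1 else 0) - (if v ∈ A then 1 else 0) := by
        intro A
        rw [hg', sum_cast_update, sum_cast_update]
        have h1 : ((g u - 1 : ℕ) : ℤ) = (g u : ℤ) - 1 := by omega
        have h2 : ((g v - 1 : ℕ) : ℤ) = (g v : ℤ) - 1 := by omega
        have h3 : Function.update g u (g u - 1) v = g v := Function.update_of_ne (Ne.symm huv) _ _
        rw [h3]
        split_ifs <;> simp [h1, h2] <;> ring
      refine ⟨g', ?_, ?_, fun w hwu hwv => hg'w w hwu hwv, by omega, by omega, by omega, by omega⟩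
      · intro A
        rw [hsum]
        by_cases h1 : u ∈ A <;> by_cases h2 : v ∈ A
        · have := ha A h1 h2
          simp only [hp', hx11 A h1 h2, h1, h2, if_true]
          push_cast; linarith
        · have := hg A
          simp only [hp', hx10 A h1 h2, h1, h2, if_true, if_false]
          push_cast; linarith
        · have := hg A
          simp only [hp', hx01 A h1 h2, h1, h2, if_true, if_false]
          push_cast; linarith
        · have := hg A
          have h3 : (0:ℤ) ≤ (xing (u,v) A : ℤ) := by positivity
          simp only [hp', h1, h2, if_false]
          linarith
      · intro w hw
        have hgw : 1 ≤ g w := by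
          by_cases hwu : w = u
          · subst hwu; omega
          · by_cases hwv : w = v
            · subst hwv; omega
            · rw [← hg'w w hwu hwv]; exact hw
        obtain ⟨T, hwT, hT⟩ := exists_tight p g hg hmin hgw
        refine not_transversal_of_witness p' g' hwT ?_ hw
        have hxle : (xing (u, v) T : ℤ)
            ≤ (if u ∈ T then (1:ℤ) else 0) + (if v ∈ T then (1:ℤ) else 0) := by
          by_cases h1 : u ∈ T <;> by_cases h2 : v ∈ T <;>
            simp [hx11 T, hx10 T, hx01 T, hx00 T, h1, h2]
        have hpT : p' T = p T - (xing (u, v) T : ℤ) := rfl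
        rw [hsum]
        linarith [hT, hxle, hpT.ge, hpT.le]
lemma xing_le_one (e : S × S) (A : Finset S) : xing e A ≤ 1 := by
  unfold xing; split <;> omega

lemma replace_step (p : Finset S → ℤ) (hsym : SymmetricFn p) (hskew : SkewSupermodular p)
    (g : S → ℕ) (hg : IsTransversal p g)
    {J : Multiset (S × S)} (hJ : CoversFn J p)
    (hopt : ∀ J' : Multiset (S × S), CoversFn J' p → Multiset.card J ≤ Multiset.card J')
    {u v : S} (he : (u, v) ∈ J) (hu : g u = 0) :
    ∃ u', 1 ≤ g u' ∧ CoversFn ((u', v) ::ₘ J.erase (u, v)) p := by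
  classical
  -- erasing the edge destroys the cover
  have hnc : ¬ CoversFn (J.erase (u, v)) p := by
    intro h
    have h1 := hopt _ h
    have h2 : Multiset.card (J.erase (u, v)) = Multiset.card J - 1 :=
      Multiset.card_erase_of_mem he
    have h3 : 0 < Multiset.card J := Multiset.card_pos.mpr (by rintro rfl; simp at he)
    omega
  unfold CoversFn at hnc
  push_neg at hnc
  obtain ⟨A0, hA0⟩ := hnc
  have hJA := hJ A0
  rw [cutDeg_erase he A0] at hJA
  have hxA0 : xing (u, v) A0 = 1 := by
    have := xing_le_one (u, v) A0
    by_contra hx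
    have hx0 : xing (u, v) A0 = 0 := by omega
    rw [hx0] at hJA
    push_cast at hJA
    omega
  have htA0 : p A0 = (cutDeg J A0 : ℤ) := by
    rw [cutDeg_erase he A0, hxA0]
    rw [hxA0] at hJA
    push_cast at hJA ⊢
    omega
  -- WLOG u ∈ A0, v ∉ A0
  have hexists : ∃ A : Finset S, u ∈ A ∧ v ∉ A ∧ p A = (cutDeg J A : ℤ) := by
    have hmem := (xing_eq_one_iff (u, v) A0).mp hxA0
    simp only at hmem
    by_cases huA : u ∈ A0
    · exact ⟨A0, huA, fun hv => hmem ⟨fun _ => hv, fun _ => huA⟩, htA0⟩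
    · have hvA : v ∈ A0 := by tauto
      refine ⟨univ \ A0, ?_, ?_, ?_⟩
      · simp [huA]
      · simp [hvA]
      · rw [← hsym A0, cutDeg_compl, htA0]
  -- minimal tight set separating u from v
  set F := Finset.univ.filter
    (fun X : Finset S => u ∈ X ∧ v ∉ X ∧ p X = (cutDeg J X : ℤ)) with hF
  have hFne : F.Nonempty := by
    obtain ⟨A, h1, h2, h3⟩ := hexists
    exact ⟨A, by simp [hF, h1, h2, h3]⟩
  obtain ⟨X, hXF, hXmin⟩ := F.exists_min_image Finset.card hFne
  have hXprop := Finset.mem_filter.mp hXF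
  obtain ⟨_, huX, hvX, hXt⟩ := hXprop
  -- a support element inside X
  have hxX : xing (u, v) X = 1 := by simp [xing, huX, hvX]
  have hdX : 1 ≤ cutDeg J X := one_le_cutDeg he hxX
  have hpX1 : (1 : ℤ) ≤ p X := by rw [hXt]; exact_mod_cast hdX
  have hsupp : ∃ u' ∈ X, 1 ≤ g u' := by
    apply exists_supp_mem
    have := hg X
    linarith
  obtain ⟨u', hu'X, hu'g⟩ := hsupp
  have hu'u : u' ≠ u := fun h => by rw [h] at hu'g; omega
  -- the key uncrossing argument
  have key : ∀ Y : Finset S, u ∈ Y → v ∉ Y → u' ∉ Y → p Y = (cutDeg J Y : ℤ) → False := by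
    intro Y huY hvY hu'Y hYt
    rcases hskew X Y with h | h
    · have hsub := cutDeg_submod J X Y
      have h1 := hJ (X ∩ Y)
      have h2 := hJ (X ∪ Y)
      have hsub' : (cutDeg J (X ∩ Y) : ℤ) + (cutDeg J (X ∪ Y) : ℤ)
          ≤ (cutDeg J X : ℤ) + (cutDeg J Y : ℤ) := by exact_mod_cast hsub
      have htI : p (X ∩ Y) = (cutDeg J (X ∩ Y) : ℤ) := by linarith
      have hmemF : X ∩ Y ∈ F := by
        refine Finset.mem_filter.mpr ⟨Finset.mem_univ _, Finset.mem_inter.mpr ⟨huX, huY⟩,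
          fun hc => hvX (Finset.mem_inter.mp hc).1, htI⟩
      have hle := hXmin _ hmemF
      have hss : X ∩ Y ⊂ X := by
        refine Finset.ssubset_iff_subset_ne.mpr ⟨Finset.inter_subset_left, fun hEq => ?_⟩
        exact hu'Y (Finset.mem_inter.mp (hEq ▸ hu'X)).2
      have := Finset.card_lt_card hss
      omega
    · have hstrong := cutDeg_posimod_strong he huX huY hvX hvY
      have h1 := hJ (X \ Y)
      have h2 := hJ (Y \ X)
      have hstrong' : (cutDeg J (X \ Y) : ℤ) + (cutDeg J (Y \ X) : ℤ) + 2
          ≤ (cutDeg J X : ℤ) + (cutDeg J Y : ℤ) := by exact_mod_cast hstrong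
      linarith
  -- the replacement covers p
  refine ⟨u', hu'g, ?_⟩
  intro B
  have hd : cutDeg ((u', v) ::ₘ J.erase (u, v)) B
      = xing (u', v) B + cutDeg (J.erase (u, v)) B := cutDeg_cons _ _ _
  have hdJ : cutDeg J B = xing (u, v) B + cutDeg (J.erase (u, v)) B := cutDeg_erase he B
  have hpB := hJ B
  by_cases hle : xing (u, v) B ≤ xing (u', v) B
  · rw [hd]
    rw [hdJ] at hpB
    push_cast at hpB ⊢
    omega
  · have hx1 : xing (u, v) B = 1 := by
      have := xing_le_one (u, v) B; omega
    have hx2 : xing (u', v) B = 0 := by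
      have := xing_le_one (u', v) B
      have := xing_le_one (u, v) B
      omega
    by_contra hnotB
    have htB : p B = (cutDeg J B : ℤ) := by
      rw [hd, hx2] at hnotB
      rw [hdJ, hx1] at hpB ⊢
      push_cast at hpB hnotB ⊢
      omega
    have hmemB := (xing_eq_one_iff (u, v) B).mp hx1
    have hmemB' : (u' ∈ B) ↔ (v ∈ B) := by
      have h0 := (xing_eq_one_iff (u', v) B)
      simp only at h0 ⊢
      by_contra hcc
      have : xing (u', v) B = 1 := by
        rw [xing_eq_one_iff]; exact fun h => hcc (by tauto)
      omega
    simp only at hmemB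
    by_cases huB : u ∈ B
    · have hvB : v ∉ B := fun h => hmemB ⟨fun _ => h, fun _ => huB⟩
      exact key B huB hvB (fun h => hvB (hmemB'.mp h)) htB
    · have hvB : v ∈ B := by tauto
      refine key (univ \ B) (by simp [huB]) (by simp [hvB]) ?_ ?_
      · simp [hmemB'.mpr hvB]
      · rw [← hsym B, cutDeg_compl, htB]

/-- cost of an edge: number of its endpoints outside the support of `g` -/
def badCost (g : S → ℕ) (e : S × S) : ℕ :=
  (if g e.1 = 0 then 1 else 0) + (if g e.2 = 0 then 1 else 0)

lemma xing_swap (a b : S) (A : Finset S) : xing (b, a) A = xing (a, b) A := by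
  unfold xing
  by_cases h1 : a ∈ A <;> by_cases h2 : b ∈ A <;> simp [h1, h2]

lemma cutDeg_swap (a b : S) (J : Multiset (S × S)) (A : Finset S) :
    cutDeg ((b, a) ::ₘ J) A = cutDeg ((a, b) ::ₘ J) A := by
  rw [cutDeg_cons, cutDeg_cons, xing_swap]

lemma sum_map_erase {e : S × S} {J : Multiset (S × S)} (he : e ∈ J) (f : S × S → ℕ) :
    (J.map f).sum = f e + ((J.erase e).map f).sum := by
  conv_lhs => rw [← Multiset.cons_erase he]
  simp

lemma cover_in_support (p : Finset S → ℤ) (hsym : SymmetricFn p) (hskew : SkewSupermodular p)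
    (g : S → ℕ) (hg : IsTransversal p g)
    (J₀ : Multiset (S × S)) (hJ₀ : CoversFn J₀ p)
    (hopt : ∀ J' : Multiset (S × S), CoversFn J' p → Multiset.card J₀ ≤ Multiset.card J') :
    ∃ J : Multiset (S × S), CoversFn J p ∧ Multiset.card J = Multiset.card J₀ ∧
      ∀ e ∈ J, 1 ≤ g e.1 ∧ 1 ≤ g e.2 := by
  suffices h : ∀ n (J : Multiset (S × S)), (J.map (badCost g)).sum = n → CoversFn J p →
      Multiset.card J = Multiset.card J₀ →
      ∃ J' : Multiset (S × S), CoversFn J' p ∧ Multiset.card J' = Multiset.card J₀ ∧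
        ∀ e ∈ J', 1 ≤ g e.1 ∧ 1 ≤ g e.2 by
    exact h _ J₀ rfl hJ₀ rfl
  intro n
  induction n using Nat.strong_induction_on with
  | _ n IH =>
    intro J hμ hJ hcard
    by_cases hall : ∀ e ∈ J, 1 ≤ g e.1 ∧ 1 ≤ g e.2
    · exact ⟨J, hJ, hcard, hall⟩
    · push_neg at hall
      obtain ⟨e, heJ, hbad⟩ := hall
      obtain ⟨a, b⟩ := e
      have hoptJ : ∀ J' : Multiset (S × S), CoversFn J' p →
          Multiset.card J ≤ Multiset.card J' := by
        intro J' hJ'; rw [hcard]; exact hopt J' hJ'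
      have hcJ : 0 < Multiset.card J := Multiset.card_pos.mpr (by rintro rfl; simp at heJ)
      have hab : g a = 0 ∨ g b = 0 := by
        simp only at hbad; omega
      rcases hab with hra | hrb
      · obtain ⟨u', hu'g, hu'cov⟩ := replace_step p hsym hskew g hg hJ hoptJ heJ hra
        set J₂ := (u', b) ::ₘ J.erase (a, b) with hJ₂
        have hcard₂ : Multiset.card J₂ = Multiset.card J₀ := by
          rw [hJ₂, Multiset.card_cons, Multiset.card_erase_of_mem heJ]
          simp only [Nat.pred_eq_sub_one]
          omega
        have hμ₂ : (J₂.map (badCost g)).sum < n := by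
          rw [hJ₂]
          rw [← hμ, sum_map_erase heJ (badCost g)]
          simp only [Multiset.map_cons, Multiset.sum_cons]
          unfold badCost
          simp only
          have : ¬ (g u' = 0) := by omega
          simp only [hra, if_true, this, if_false]
          omega
        exact IH _ hμ₂ J₂ rfl hu'cov hcard₂
      · -- swap the edge and apply the same step
        set J₁ := (b, a) ::ₘ J.erase (a, b) with hJ₁
        have hcov₁ : CoversFn J₁ p := by
          intro A
          have h1 := hJ A
          rw [cutDeg_erase heJ A] at h1
          rw [hJ₁, cutDeg_cons, xing_swap]
          exact h1
        have hcard₁ : Multiset.card J₁ = Multiset.card J := by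
          rw [hJ₁, Multiset.card_cons, Multiset.card_erase_of_mem heJ]
          simp only [Nat.pred_eq_sub_one]; omega
        have hopt₁ : ∀ J' : Multiset (S × S), CoversFn J' p →
            Multiset.card J₁ ≤ Multiset.card J' := by
          intro J' hJ'; rw [hcard₁]; exact hoptJ J' hJ'
        have hmem₁ : (b, a) ∈ J₁ := Multiset.mem_cons_self _ _
        obtain ⟨v', hv'g, hv'cov⟩ := replace_step p hsym hskew g hg hcov₁ hopt₁ hmem₁ hrb
        rw [hJ₁, Multiset.erase_cons_head] at hv'cov
        set J₂ := (v', a) ::ₘ J.erase (a, b) with hJ₂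
        have hcard₂ : Multiset.card J₂ = Multiset.card J₀ := by
          rw [hJ₂, Multiset.card_cons, Multiset.card_erase_of_mem heJ]
          simp only [Nat.pred_eq_sub_one]
          omega
        have hμ₂ : (J₂.map (badCost g)).sum < n := by
          rw [hJ₂]
          rw [← hμ, sum_map_erase heJ (badCost g)]
          simp only [Multiset.map_cons, Multiset.sum_cons]
          unfold badCost
          simp only
          have : ¬ (g v' = 0) := by omega
          simp only [hrb, if_true, this, if_false]
          omega
        exact IH _ hμ₂ J₂ rfl hv'cov hcard₂
lemma main_aux (n : ℕ) :
    ∀ (p : Finset S → ℤ), SymmetricFn p → SkewSupermodular p →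
    ∀ g : S → ℕ, IsTransversal p g →
    (∀ v : S, 1 ≤ g v → ¬ IsTransversal p (Function.update g v (g v - 1))) →
    ∀ J₀ : Multiset (S × S), CoversFn J₀ p →
    (∀ J' : Multiset (S × S), CoversFn J' p → Multiset.card J₀ ≤ Multiset.card J') →
    Multiset.card J₀ = n →
    ∃ J : Multiset (S × S), CoversFn J p ∧ Multiset.card J = Multiset.card J₀ ∧
      ∀ v : S, (1 ≤ g v → (g v : ℤ) ≤ (cutDeg J {v} : ℤ)) ∧ (g v = 0 → cutDeg J {v} = 0) := by
  induction n using Nat.strong_induction_on with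
  | _ n IH =>
    intro p hsym hskew g hg hmin J₀ hJ₀ hopt hn
    by_cases h0 : Multiset.card J₀ = 0
    · -- base case : the empty multiset works, and g must be identically 0
      have hJ0 : J₀ = 0 := Multiset.card_eq_zero.mp h0
      refine ⟨0, ?_, by simp [h0], ?_⟩
      · rw [← hJ0]; exact hJ₀
      · intro w
        constructor
        · intro hw
          exfalso
          obtain ⟨T, hwT, hT⟩ := exists_tight p g hg hmin hw
          have h1 := hJ₀ T
          rw [hJ0] at h1
          have h2 : cutDeg (0 : Multiset (S × S)) T = 0 := rfl
          have h3 := single_le_sum_g g hwT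
          rw [h2, hT] at h1
          push_cast at h1
          have : (1:ℤ) ≤ (g w : ℤ) := by exact_mod_cast hw
          linarith
        · intro _; rfl
    · -- inductive step
      obtain ⟨J₁, hJ₁cov, hJ₁card, hJ₁supp⟩ := cover_in_support p hsym hskew g hg J₀ hJ₀ hopt
      have hJ₁ne : J₁ ≠ 0 := by
        intro h; rw [h] at hJ₁card; simp at hJ₁card; omega
      obtain ⟨e, he⟩ := Multiset.exists_mem_of_ne_zero hJ₁ne
      obtain ⟨u, v⟩ := e
      obtain ⟨hu, hv⟩ := hJ₁supp (u, v) he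
      simp only at hu hv
      have huv : u ≠ v := by
        intro h
        subst h
        have hcov' : CoversFn (J₁.erase (u, u)) p := by
          intro A
          have h1 := hJ₁cov A
          rw [cutDeg_erase he A] at h1
          have hx : xing (u, u) A = 0 := by simp [xing]
          rw [hx] at h1
          push_cast at h1 ⊢
          omega
        have h1 := hopt _ hcov'
        rw [Multiset.card_erase_of_mem he] at h1
        simp only [Nat.pred_eq_sub_one] at h1
        omega
      set p' : Finset S → ℤ := fun A => p A - (xing (u, v) A : ℤ) with hp'
      have hsym' : SymmetricFn p' := by
        intro A
        simp only [hp']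
        rw [← hsym A, xing_compl]
      have hskew' : SkewSupermodular p' := by
        intro A B
        rcases hskew A B with h | h
        · left
          have := xing_submod (u, v) A B
          simp only [hp']
          push_cast
          omega
        · right
          have := xing_posimod (u, v) A B
          simp only [hp']
          push_cast
          omega
      have hJ₁'cov : CoversFn (J₁.erase (u, v)) p' := by
        intro A
        have h1 := hJ₁cov A
        rw [cutDeg_erase he A] at h1
        simp only [hp']
        push_cast at h1 ⊢
        omega
      have hopt' : ∀ K : Multiset (S × S), CoversFn K p' →
          Multiset.card (J₁.erase (u, v)) ≤ Multiset.card K := by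
        intro K hK
        have hcovK : CoversFn ((u, v) ::ₘ K) p := by
          intro A
          have h1 := hK A
          rw [cutDeg_cons]
          simp only [hp'] at h1
          push_cast at h1 ⊢
          omega
        have h1 := hopt _ hcovK
        rw [Multiset.card_cons] at h1
        rw [Multiset.card_erase_of_mem he]
        simp only [Nat.pred_eq_sub_one]
        omega
      obtain ⟨g', hg'trans, hg'min, hg'off, hg'u1, hg'u2, hg'v1, hg'v2⟩ :=
        residual_transversal p hskew g hg hmin hu hv huv
      have hcard' : Multiset.card (J₁.erase (u, v)) = n - 1 := by
        rw [Multiset.card_erase_of_mem he]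
        simp only [Nat.pred_eq_sub_one]
        omega
      obtain ⟨K, hKcov, hKcard, hKdeg⟩ := IH (n - 1) (by omega) p' hsym' hskew' g'
        hg'trans hg'min (J₁.erase (u, v)) hJ₁'cov hopt' hcard'
      rw [hcard'] at hKcard
      refine ⟨(u, v) ::ₘ K, ?_, ?_, ?_⟩
      · intro A
        have h1 := hKcov A
        rw [cutDeg_cons]
        simp only [hp'] at h1
        push_cast at h1 ⊢
        omega
      · rw [Multiset.card_cons]
        omega
      · intro w
        have hdeg : cutDeg ((u, v) ::ₘ K) {w} = xing (u, v) {w} + cutDeg K {w} :=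
          cutDeg_cons _ _ _
        by_cases hwu : w = u
        · subst hwu
          have hxw : xing (w, v) {w} = 1 := by
            simp [xing, Finset.mem_singleton, (Ne.symm huv : v ≠ w)]
          constructor
          · intro _
            by_cases h1 : 1 ≤ g' w
            · have h2 := (hKdeg w).1 h1
              rw [hdeg, hxw]
              push_cast at h2 ⊢
              omega
            · have h2 : g' w = 0 := by omega
              rw [hdeg, hxw]
              push_cast
              omega
          · intro h; omega
        · by_cases hwv : w = v
          · subst hwv
            have hxw : xing (u, w) {w} = 1 := by
              simp [xing, Finset.mem_singleton, (huv : u ≠ w)]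
            constructor
            · intro _
              by_cases h1 : 1 ≤ g' w
              · have h2 := (hKdeg w).1 h1
                rw [hdeg, hxw]
                push_cast at h2 ⊢
                omega
              · have h2 : g' w = 0 := by omega
                rw [hdeg, hxw]
                push_cast
                omega
            · intro h; omega
          · have hxw : xing (u, v) {w} = 0 := by
              simp [xing, Finset.mem_singleton]
              constructor <;> intro h
              · exact absurd h.symm hwu
              · exact absurd h.symm hwv
            have hgw : g' w = g w := hg'off w hwu hwv
            constructor
            · intro h1
              have h2 := (hKdeg w).1 (by omega)
              rw [hdeg, hxw]
              rw [hgw] at h2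
              push_cast at h2 ⊢
              omega
            · intro h1
              have h2 := (hKdeg w).2 (by omega)
              rw [hdeg, hxw, h2]
end BF

/-- Lemma: for a minimal transversal `g` of a symmetric skew-supermodular function `p`,
there is an optimal `p`-cover `J` with `d_J(v) ≥ g(v)` on the support of `g` and
`d_J(v) = 0` elsewhere. -/
theorem exists_opt_cover_respecting_transversal {S : Type*} [Fintype S] [DecidableEq S]
    (p : Finset S → ℤ) (hsym : SymmetricFn p) (hskew : SkewSupermodular p)
    (g : S → ℕ) (hg : IsTransversal p g)
    (hmin : ∀ v : S, 1 ≤ g v → ¬ IsTransversal p (Function.update g v (g v - 1)))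
    (J₀ : Multiset (S × S)) (hJ₀ : CoversFn J₀ p)
    (hopt : ∀ J' : Multiset (S × S), CoversFn J' p → Multiset.card J₀ ≤ Multiset.card J') :
    ∃ J : Multiset (S × S), CoversFn J p ∧ Multiset.card J = Multiset.card J₀ ∧
      ∀ v : S, (1 ≤ g v → (g v : ℤ) ≤ (cutDeg J {v} : ℤ)) ∧ (g v = 0 → cutDeg J {v} = 0) :=
  BF.main_aux (Multiset.card J₀) p hsym hskew g hg hmin J₀ hJ₀ hopt rfl
end

section
/- Let p₁, ..., p_m be integers each in the range [0, k] with Σ p_j ≥ k, where k ≥ 2. Then {1,...,m} can be partitioned into nonempty parts such that for each part I, the value (Σ_{j∈I} p_j) + 1 lies in the interval [k, 3k], except possibly that all indices lie in a single part whose sum plus 1 is at most 3k and at least k. -/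
open Finset

lemma binpacking_exists_chunk {m : ℕ} (k : ℤ) (hk : 2 ≤ k) (p : Fin m → ℤ)
    (hub : ∀ j, p j ≤ k) :
    ∀ s : Finset (Fin m), k ≤ ∑ j ∈ s, p j →
      ∃ t ⊆ s, k ≤ ∑ j ∈ t, p j ∧ ∑ j ∈ t, p j ≤ 2 * k := by
  intro s
  induction s using Finset.strongInduction with
  | _ s ih =>
    intro hs
    by_cases h : ∑ j ∈ s, p j ≤ 2 * k
    · exact ⟨s, Finset.Subset.rfl, hs, h⟩
    · push_neg at h
      have hne : s.Nonempty := by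
        rcases s.eq_empty_or_nonempty with rfl | h'
        · simp at hs; linarith
        · exact h'
      obtain ⟨a, ha⟩ := hne
      have hsub : s.erase a ⊂ s := Finset.erase_ssubset ha
      have hsum' : k ≤ ∑ j ∈ s.erase a, p j := by
        have h1 := Finset.sum_erase_add s p ha
        have h2 := hub a
        linarith
      obtain ⟨t, hts, h1, h2⟩ := ih _ hsub hsum'
      exact ⟨t, hts.trans (Finset.erase_subset _ _), h1, h2⟩

lemma binpacking_part_lemma {m : ℕ} (k : ℤ) (hk : 2 ≤ k) (p : Fin m → ℤ)
    (hnn : ∀ j, 0 ≤ p j) (hub : ∀ j, p j ≤ k) :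
    ∀ s : Finset (Fin m), k ≤ ∑ j ∈ s, p j →
      ∃ P : Finpartition s,
        ∀ I ∈ P.parts, k - 1 ≤ ∑ j ∈ I, p j ∧ ∑ j ∈ I, p j ≤ 3 * k - 1 := by
  intro s
  induction s using Finset.strongInduction with
  | _ s ih =>
    intro hs
    by_cases h : ∑ j ∈ s, p j ≤ 3 * k - 1
    · have hne : s ≠ (∅ : Finset (Fin m)) := by
        rintro rfl; simp at hs; linarith
      refine ⟨Finpartition.indiscrete hne, ?_⟩
      intro I hI
      simp only [Finpartition.indiscrete, Finset.mem_singleton] at hI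
      subst hI
      exact ⟨by linarith, h⟩
    · push_neg at h
      obtain ⟨t, hts, h1, h2⟩ := binpacking_exists_chunk k hk p hub s hs
      have htne : t ≠ (∅ : Finset (Fin m)) := by
        rintro rfl; simp at h1; linarith
      have hrsum : k ≤ ∑ j ∈ s \ t, p j := by
        rw [Finset.sum_sdiff_eq_sub hts]; linarith
      have hss : s \ t ⊂ s :=
        Finset.sdiff_ssubset hts (Finset.nonempty_iff_ne_empty.mpr htne)
      obtain ⟨P, hP⟩ := ih _ hss hrsum
      have hdisj : Disjoint (s \ t) t := Finset.sdiff_disjoint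
      have hsup : (s \ t) ⊔ t = s := by
        rw [Finset.sup_eq_union, Finset.sdiff_union_of_subset hts]
      refine ⟨P.extend htne hdisj hsup, ?_⟩
      intro I hI
      simp only [Finpartition.extend, Finset.mem_insert] at hI
      rcases hI with rfl | hI
      · exact ⟨by linarith, by linarith⟩
      · exact hP I hI

/-- Bin-packing claim: integers `p j ∈ [0, k]` with total sum at least `k` (`k ≥ 2`) can be
partitioned into parts each having total sum in `[k − 1, 3k − 1]` (so each part's sum plus one
lies in `[k, 3k]`). -/
theorem binpacking_partition (m : ℕ) (k : ℤ) (hk : 2 ≤ k) (p : Fin m → ℤ)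
    (hnn : ∀ j, 0 ≤ p j) (hub : ∀ j, p j ≤ k) (hsum : k ≤ ∑ j, p j) :
    ∃ P : Finpartition (Finset.univ : Finset (Fin m)),
      ∀ I ∈ P.parts, k - 1 ≤ ∑ j ∈ I, p j ∧ ∑ j ∈ I, p j ≤ 3 * k - 1 := by
  exact binpacking_part_lemma k hk p hnn hub Finset.univ hsum
end

section
/- Let H = (U, E_H) be a graph with an independent set R ⊆ U of terminals, and suppose every non-terminal s ∈ U \ R has exactly 2 terminal neighbors (denote this pair R(s)). If for every pair of adjacent non-terminals a, b the sets R(a) and R(b) intersect, then every set S of non-terminals such that H[S ∪ R'] is connected for the set R' of terminals dominated by S with R' = R satisfies |S| ≥ |R| − 1. -/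
open Finset

private lemma exists_parent {V : Type*} {G : SimpleGraph V} (h : G.Connected) (v₀ v : V)
    (hne : v ≠ v₀) : ∃ u, G.Adj u v ∧ G.dist v₀ u + 1 ≤ G.dist v₀ v := by
  obtain ⟨p, hp⟩ := h.exists_walk_length_eq_dist v v₀
  cases p with
  | nil => exact absurd rfl hne
  | @cons _ u _ hadj q =>
    refine ⟨u, hadj.symm, ?_⟩
    rw [SimpleGraph.Walk.length_cons] at hp
    have h1 : G.dist v₀ u ≤ q.length := by
      rw [SimpleGraph.dist_comm]; exact SimpleGraph.dist_le q
    have h2 : G.dist v₀ v = G.dist v v₀ := SimpleGraph.dist_comm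
    omega

private lemma conn_card_le_edges {V : Type*} [Fintype V] [DecidableEq V] (G : SimpleGraph V)
    [Fintype G.edgeSet] (h : G.Connected) :
    Fintype.card V ≤ G.edgeFinset.card + 1 := by
  classical
  obtain ⟨v₀⟩ := h.nonempty
  have hpar : ∀ v : V, v ≠ v₀ → ∃ u, G.Adj u v ∧ G.dist v₀ u + 1 ≤ G.dist v₀ v :=
    fun v hv => exists_parent h v₀ v hv
  choose par hadj hdist using hpar
  let f : V → Sym2 V := fun v => if hv : v ≠ v₀ then s(par v hv, v) else s(v₀, v₀)
  have hmaps : ∀ v ∈ univ.erase v₀, f v ∈ G.edgeFinset := by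
    intro v hv
    have hv' : v ≠ v₀ := (Finset.mem_erase.mp hv).1
    simp only [f, dif_pos hv', SimpleGraph.mem_edgeFinset, SimpleGraph.mem_edgeSet]
    exact hadj v hv'
  have hinj : Set.InjOn f (univ.erase v₀) := by
    intro a ha b hb hab
    have ha' : a ≠ v₀ := (Finset.mem_erase.mp (by exact_mod_cast ha)).1
    have hb' : b ≠ v₀ := (Finset.mem_erase.mp (by exact_mod_cast hb)).1
    simp only [f, dif_pos ha', dif_pos hb', Sym2.eq_iff] at hab
    rcases hab with ⟨h1, h2⟩ | ⟨h1, h2⟩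
    · exact h2
    · exfalso
      have d1 := hdist a ha'
      have d2 := hdist b hb'
      rw [h1] at d1
      rw [← h2] at d2
      omega
  have hle := Finset.card_le_card_of_injOn f hmaps hinj
  have hcard : (univ.erase v₀).card = Fintype.card V - 1 := by
    rw [Finset.card_erase_of_mem (mem_univ _), Finset.card_univ]
  have hpos : 1 ≤ Fintype.card V := @Fintype.card_pos _ _ ⟨v₀⟩
  omega

/-- Lemma 1 of the paper: in an SS-CDS instance where every non-terminal has exactly two
terminal neighbors and any two adjacent non-terminals share a terminal neighbor, every
feasible connected dominating solution `S` has `|S| ≥ |R| − 1`. -/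
theorem cds_lower_bound {U : Type*} [Fintype U] [DecidableEq U]
    (H : SimpleGraph U) [DecidableRel H.Adj] (R : Finset U)
    (hind : ∀ u ∈ R, ∀ v ∈ R, ¬ H.Adj u v)
    (hdeg : ∀ s : U, s ∉ R → (H.neighborFinset s ∩ R).card = 2)
    (hmeet : ∀ a b : U, a ∉ R → b ∉ R → H.Adj a b →
      ((H.neighborFinset a ∩ R) ∩ (H.neighborFinset b ∩ R)).Nonempty)
    (S : Finset U) (hSR : ∀ s ∈ S, s ∉ R)
    (hconn : (H.induce (↑S : Set U)).Connected)
    (hdom : ∀ r ∈ R, ∃ s ∈ S, H.Adj s r) :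
    R.card ≤ S.card + 1 := by
  classical
  rcases R.eq_empty_or_nonempty with rfl | hR
  · simp
  -- the auxiliary graph on terminals
  let G : SimpleGraph {x // x ∈ R} :=
    { Adj := fun r r' => r ≠ r' ∧ ∃ s ∈ S, H.Adj s r ∧ H.Adj s r'
      symm := ⟨by rintro r r' ⟨hne, s, hs, h1, h2⟩; exact ⟨hne.symm, s, hs, h2, h1⟩⟩
      loopless := ⟨by rintro r ⟨hne, -⟩; exact hne rfl⟩ }
  -- connectivity transfer along walks in the induced graph
  have key : ∀ (a b : (↑S : Set U)) (w : (H.induce (↑S : Set U)).Walk a b)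
      (r r' : {x // x ∈ R}), H.Adj ↑a ↑r → H.Adj ↑b ↑r' → G.Reachable r r' := by
    intro a b w
    induction w with
    | nil =>
      intro r r' h1 h2
      rename_i c
      by_cases h : r = r'
      · exact h ▸ SimpleGraph.Reachable.refl r
      · exact SimpleGraph.Adj.reachable ⟨h, c, by exact_mod_cast c.2, h1, h2⟩
    | @cons a c b hadj w ih =>
      intro r r' h1 h2
      have hAdj : H.Adj ↑a ↑c := by
        simpa using hadj
      have haR : (a : U) ∉ R := hSR a (by exact_mod_cast a.2)
      have hcR : (c : U) ∉ R := hSR c (by exact_mod_cast c.2)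
      obtain ⟨t, ht⟩ := hmeet a c haR hcR hAdj
      simp only [Finset.mem_inter, SimpleGraph.mem_neighborFinset] at ht
      obtain ⟨⟨hat, htR⟩, hct, -⟩ := ht
      have hrt : G.Reachable r ⟨t, htR⟩ := by
        by_cases h : r = ⟨t, htR⟩
        · exact h ▸ SimpleGraph.Reachable.refl r
        · exact SimpleGraph.Adj.reachable ⟨h, a, by exact_mod_cast a.2, h1, hat⟩
      exact hrt.trans (ih ⟨t, htR⟩ r' hct h2)
  have hGconn : G.Connected := by
    rw [SimpleGraph.connected_iff]
    refine ⟨fun r r' => ?_, ⟨⟨hR.choose, hR.choose_spec⟩⟩⟩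
    obtain ⟨s, hs, hsr⟩ := hdom ↑r r.2
    obtain ⟨s', hs', hsr'⟩ := hdom ↑r' r'.2
    obtain ⟨w⟩ := hconn.preconnected ⟨s, by exact_mod_cast hs⟩ ⟨s', by exact_mod_cast hs'⟩
    exact key _ _ w r r' hsr hsr'
  -- each edge of G comes from a unique non-terminal vertex
  have hex : ∀ e : Sym2 {x // x ∈ R}, ∃ s : U, e ∈ G.edgeFinset →
      s ∈ S ∧ ∀ x : {x // x ∈ R}, x ∈ e ↔ H.Adj s ↑x := by
    intro e
    induction e using Sym2.ind with
    | _ r r' =>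
      by_cases he : s(r, r') ∈ G.edgeFinset
      · rw [SimpleGraph.mem_edgeFinset, SimpleGraph.mem_edgeSet] at he
        obtain ⟨hne, s, hs, h1, h2⟩ := he
        refine ⟨s, fun _ => ⟨hs, fun x => ?_⟩⟩
        have hsR : s ∉ R := hSR s hs
        have hcard := hdeg s hsR
        have hneU : (r : U) ≠ (r' : U) := fun h => hne (Subtype.ext h)
        have hsub : ({(r : U), (r' : U)} : Finset U) ⊆ H.neighborFinset s ∩ R := by
          intro z hz
          rcases Finset.mem_insert.mp hz with rfl | hz
          · exact Finset.mem_inter.mpr ⟨(SimpleGraph.mem_neighborFinset _ _ _).mpr h1, r.2⟩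
          · rw [Finset.mem_singleton] at hz
            subst hz
            exact Finset.mem_inter.mpr ⟨(SimpleGraph.mem_neighborFinset _ _ _).mpr h2, r'.2⟩
        have heq : H.neighborFinset s ∩ R = {(r : U), (r' : U)} :=
          (Finset.eq_of_subset_of_card_le hsub (by rw [hcard, Finset.card_pair hneU])).symm
        constructor
        · intro hx
          rcases Sym2.mem_iff.mp hx with rfl | rfl
          · exact h1
          · exact h2
        · intro hx
          have hx' : (x : U) ∈ H.neighborFinset s ∩ R :=
            Finset.mem_inter.mpr ⟨(SimpleGraph.mem_neighborFinset _ _ _).mpr hx, x.2⟩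
          rw [heq] at hx'
          rcases Finset.mem_insert.mp hx' with h | h
          · exact Sym2.mem_iff.mpr (Or.inl (Subtype.ext h))
          · rw [Finset.mem_singleton] at h
            exact Sym2.mem_iff.mpr (Or.inr (Subtype.ext h))
      · exact ⟨hR.choose, fun h => absurd h he⟩
  choose g hg using hex
  have hedge : G.edgeFinset.card ≤ S.card := by
    apply Finset.card_le_card_of_injOn g (fun e he => (hg e he).1)
    intro e₁ he₁ e₂ he₂ hge
    have h1 := (hg e₁ (by exact_mod_cast he₁)).2
    have h2 := (hg e₂ (by exact_mod_cast he₂)).2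
    refine Sym2.ext fun x => ?_
    rw [h1 x, hge, ← h2 x]
  have hcardR : Fintype.card {x // x ∈ R} = R.card := Fintype.card_coe R
  have := conn_card_le_edges G hGconn
  omega
end

section
/- Let p be a nonnegative symmetric skew-supermodular set function on S with p(∅) = 0, and let g be a minimal p-transversal. Then Σ_{v∈S} g(v) = max{Σ_{A∈F} p(A) : F a subpartition of S}. -/
open Finset

/-- A sum over `insert` is at most the extra term plus the old sum (in `ℕ`). -/
lemma sum_insert_le' {α : Type*} [DecidableEq α] (a : α) (s : Finset α) (f : α → ℕ) :
    ∑ x ∈ insert a s, f x ≤ f a + ∑ x ∈ s, f x := by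
  by_cases h : a ∈ s
  · rw [Finset.insert_eq_self.2 h]; omega
  · rw [Finset.sum_insert h]

/-- Uncrossing step: if a family of nonempty tight sets has two intersecting members,
we can produce a family with strictly smaller total size carrying the same support. -/
lemma uncross_step {S : Type*} [Fintype S] [DecidableEq S]
    (p : Finset S → ℤ) (g : S → ℕ)
    (hskew : SkewSupermodular p) (hg : IsTransversal p g)
    (F : Finset (Finset S))
    (hne : ∀ C ∈ F, C.Nonempty) (ht : ∀ C ∈ F, p C = ∑ v ∈ C, (g v : ℤ))
    (A B : Finset S) (hA : A ∈ F) (hB : B ∈ F) (hAB : A ≠ B) (hnd : ¬ Disjoint A B) :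
    ∃ F' : Finset (Finset S),
      (∀ C ∈ F', C.Nonempty) ∧ (∀ C ∈ F', p C = ∑ v ∈ C, (g v : ℤ)) ∧
      (∑ C ∈ F', C.card) + 1 ≤ ∑ C ∈ F, C.card ∧
      (∀ v, 0 < g v → v ∈ F.biUnion id → v ∈ F'.biUnion id) := by
  have hint : (A ∩ B).Nonempty := Finset.not_disjoint_iff_nonempty_inter.mp hnd
  have hintcard : 1 ≤ (A ∩ B).card := Finset.card_pos.2 hint
  have hBe : B ∈ F.erase A := Finset.mem_erase.2 ⟨Ne.symm hAB, hB⟩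
  -- sums over the double erase
  have hsum1 : (∑ C ∈ F.erase A, C.card) + A.card = ∑ C ∈ F, C.card :=
    Finset.sum_erase_add _ _ hA
  have hsum2 : (∑ C ∈ (F.erase A).erase B, C.card) + B.card = ∑ C ∈ F.erase A, C.card :=
    Finset.sum_erase_add _ _ hBe
  have hmemee : ∀ C ∈ (F.erase A).erase B, C ∈ F := fun C hC =>
    Finset.mem_of_mem_erase (Finset.mem_of_mem_erase hC)
  rcases hskew A B with hcase | hcase
  · -- union case
    have h1 : p (A ∩ B) ≤ ∑ v ∈ A ∩ B, (g v : ℤ) := hg _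
    have h2 : p (A ∪ B) ≤ ∑ v ∈ A ∪ B, (g v : ℤ) := hg _
    have h3 : (∑ v ∈ A ∪ B, (g v : ℤ)) + ∑ v ∈ A ∩ B, (g v : ℤ)
        = (∑ v ∈ A, (g v : ℤ)) + ∑ v ∈ B, (g v : ℤ) := Finset.sum_union_inter
    have htu : p (A ∪ B) = ∑ v ∈ A ∪ B, (g v : ℤ) := by
      have := ht A hA; have := ht B hB; linarith
    refine ⟨insert (A ∪ B) ((F.erase A).erase B), ?_, ?_, ?_, ?_⟩
    · intro C hC
      rcases Finset.mem_insert.mp hC with rfl | hC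
      · exact hint.mono Finset.inter_subset_union
      · exact hne C (hmemee C hC)
    · intro C hC
      rcases Finset.mem_insert.mp hC with rfl | hC
      · exact htu
      · exact ht C (hmemee C hC)
    · have hle := sum_insert_le' (A ∪ B) ((F.erase A).erase B) Finset.card
      have hcu := Finset.card_union_add_card_inter A B
      omega
    · intro v hv hvF
      rcases Finset.mem_biUnion.mp hvF with ⟨C, hC, hvC⟩
      by_cases hCA : C = A
      · exact Finset.mem_biUnion.mpr ⟨A ∪ B, Finset.mem_insert_self _ _,
          Finset.mem_union_left _ (hCA ▸ hvC)⟩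
      by_cases hCB : C = B
      · exact Finset.mem_biUnion.mpr ⟨A ∪ B, Finset.mem_insert_self _ _,
          Finset.mem_union_right _ (hCB ▸ hvC)⟩
      · exact Finset.mem_biUnion.mpr ⟨C, Finset.mem_insert_of_mem
          (Finset.mem_erase.2 ⟨hCB, Finset.mem_erase.2 ⟨hCA, hC⟩⟩), hvC⟩
  · -- difference case
    have h1 : p (A \ B) ≤ ∑ v ∈ A \ B, (g v : ℤ) := hg _
    have h2 : p (B \ A) ≤ ∑ v ∈ B \ A, (g v : ℤ) := hg _
    have h3 : (∑ v ∈ A \ B, (g v : ℤ)) + ∑ v ∈ A ∩ B, (g v : ℤ) = ∑ v ∈ A, (g v : ℤ) := by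
      have := Finset.sum_sdiff (f := fun v => (g v : ℤ)) (Finset.inter_subset_left : A ∩ B ⊆ A)
      rwa [Finset.sdiff_inter_self_left] at this
    have h4 : (∑ v ∈ B \ A, (g v : ℤ)) + ∑ v ∈ A ∩ B, (g v : ℤ) = ∑ v ∈ B, (g v : ℤ) := by
      have := Finset.sum_sdiff (f := fun v => (g v : ℤ)) (Finset.inter_subset_left : B ∩ A ⊆ B)
      rw [Finset.sdiff_inter_self_left] at this
      rwa [Finset.inter_comm]
    have hnng : (0:ℤ) ≤ ∑ v ∈ A ∩ B, (g v : ℤ) :=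
      Finset.sum_nonneg fun v _ => Int.natCast_nonneg _
    have hzero : ∑ v ∈ A ∩ B, (g v : ℤ) = 0 := by
      have := ht A hA; have := ht B hB; linarith
    have hgz : ∀ v ∈ A ∩ B, g v = 0 := by
      intro v hv
      have := (Finset.sum_eq_zero_iff_of_nonneg
        (fun v _ => Int.natCast_nonneg (g v))).mp hzero v hv
      exact_mod_cast this
    have htAB : p (A \ B) = ∑ v ∈ A \ B, (g v : ℤ) := by
      have := ht A hA; have := ht B hB; linarith
    have htBA : p (B \ A) = ∑ v ∈ B \ A, (g v : ℤ) := by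
      have := ht A hA; have := ht B hB; linarith
    by_cases hABe : A \ B = ∅
    · -- A ⊆ B : just drop A
      have hAsub : A ⊆ B := Finset.sdiff_eq_empty_iff_subset.mp hABe
      refine ⟨F.erase A, fun C hC => hne C (Finset.mem_of_mem_erase hC),
        fun C hC => ht C (Finset.mem_of_mem_erase hC), ?_, ?_⟩
      · have := Finset.card_pos.2 (hne A hA); omega
      · intro v hv hvF
        rcases Finset.mem_biUnion.mp hvF with ⟨C, hC, hvC⟩
        by_cases hCA : C = A
        · exact Finset.mem_biUnion.mpr ⟨B, hBe, hAsub (hCA ▸ hvC)⟩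
        · exact Finset.mem_biUnion.mpr ⟨C, Finset.mem_erase.2 ⟨hCA, hC⟩, hvC⟩
    by_cases hBAe : B \ A = ∅
    · -- B ⊆ A : drop B
      have hBsub : B ⊆ A := Finset.sdiff_eq_empty_iff_subset.mp hBAe
      have hAe : A ∈ F.erase B := Finset.mem_erase.2 ⟨hAB, hA⟩
      refine ⟨F.erase B, fun C hC => hne C (Finset.mem_of_mem_erase hC),
        fun C hC => ht C (Finset.mem_of_mem_erase hC), ?_, ?_⟩
      · have h5 : (∑ C ∈ F.erase B, C.card) + B.card = ∑ C ∈ F, C.card :=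
          Finset.sum_erase_add _ _ hB
        have := Finset.card_pos.2 (hne B hB); omega
      · intro v hv hvF
        rcases Finset.mem_biUnion.mp hvF with ⟨C, hC, hvC⟩
        by_cases hCB : C = B
        · exact Finset.mem_biUnion.mpr ⟨A, hAe, hBsub (hCB ▸ hvC)⟩
        · exact Finset.mem_biUnion.mpr ⟨C, Finset.mem_erase.2 ⟨hCB, hC⟩, hvC⟩
    · -- both differences nonempty: replace A, B by A \ B, B \ A
      refine ⟨insert (A \ B) (insert (B \ A) ((F.erase A).erase B)), ?_, ?_, ?_, ?_⟩
      · intro C hC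
        rcases Finset.mem_insert.mp hC with rfl | hC
        · exact Finset.nonempty_of_ne_empty hABe
        rcases Finset.mem_insert.mp hC with rfl | hC
        · exact Finset.nonempty_of_ne_empty hBAe
        · exact hne C (hmemee C hC)
      · intro C hC
        rcases Finset.mem_insert.mp hC with rfl | hC
        · exact htAB
        rcases Finset.mem_insert.mp hC with rfl | hC
        · exact htBA
        · exact ht C (hmemee C hC)
      · have hle1 := sum_insert_le' (A \ B) (insert (B \ A) ((F.erase A).erase B)) Finset.card
        have hle2 := sum_insert_le' (B \ A) ((F.erase A).erase B) Finset.card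
        have hc1 := Finset.card_inter_add_card_sdiff A B
        have hc2 := Finset.card_inter_add_card_sdiff B A
        have hc3 : (B ∩ A).card = (A ∩ B).card := by rw [Finset.inter_comm]
        omega
      · intro v hv hvF
        rcases Finset.mem_biUnion.mp hvF with ⟨C, hC, hvC⟩
        have hvnotin : v ∉ A ∩ B := fun hmem => by
          have := hgz v hmem; omega
        by_cases hCA : C = A
        · subst hCA
          exact Finset.mem_biUnion.mpr ⟨C \ B, Finset.mem_insert_self _ _,
            Finset.mem_sdiff.2 ⟨hvC, fun hvB => hvnotin (Finset.mem_inter.2 ⟨hvC, hvB⟩)⟩⟩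
        by_cases hCB : C = B
        · subst hCB
          exact Finset.mem_biUnion.mpr ⟨C \ A, Finset.mem_insert_of_mem
            (Finset.mem_insert_self _ _),
            Finset.mem_sdiff.2 ⟨hvC, fun hvA => hvnotin (Finset.mem_inter.2 ⟨hvA, hvC⟩)⟩⟩
        · exact Finset.mem_biUnion.mpr ⟨C, Finset.mem_insert_of_mem
            (Finset.mem_insert_of_mem (Finset.mem_erase.2 ⟨hCB, Finset.mem_erase.2 ⟨hCA, hC⟩⟩)),
            hvC⟩

/-- Repeated uncrossing: from any family of nonempty tight sets we get a pairwise
disjoint one covering the same support. -/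
lemma exists_disjoint_family {S : Type*} [Fintype S] [DecidableEq S]
    (p : Finset S → ℤ) (g : S → ℕ)
    (hskew : SkewSupermodular p) (hg : IsTransversal p g) :
    ∀ (n : ℕ) (F : Finset (Finset S)), (∑ C ∈ F, C.card) ≤ n →
      (∀ C ∈ F, C.Nonempty) → (∀ C ∈ F, p C = ∑ v ∈ C, (g v : ℤ)) →
      ∃ F' : Finset (Finset S),
        (∀ C ∈ F', C.Nonempty) ∧
        (∀ C ∈ F', p C = ∑ v ∈ C, (g v : ℤ)) ∧
        ((F' : Set (Finset S)).Pairwise fun A B => Disjoint A B) ∧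
        (∀ v, 0 < g v → v ∈ F.biUnion id → v ∈ F'.biUnion id) := by
  intro n
  induction n with
  | zero =>
    intro F hcard hne ht
    refine ⟨F, hne, ht, ?_, fun v _ h => h⟩
    intro A hA B hB hABne
    exfalso
    have h1 : 1 ≤ A.card := Finset.card_pos.2 (hne A hA)
    have h2 : A.card ≤ ∑ C ∈ F, C.card :=
      Finset.single_le_sum (fun C _ => Nat.zero_le _) hA
    omega
  | succ n ih =>
    intro F hcard hne ht
    by_cases hdisj : (F : Set (Finset S)).Pairwise fun A B => Disjoint A B
    · exact ⟨F, hne, ht, hdisj, fun v _ h => h⟩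
    · simp only [Set.Pairwise, not_forall] at hdisj
      obtain ⟨A, hA, B, hB, hAB, hnd⟩ := hdisj
      obtain ⟨F', hne', ht', hcard', hcov'⟩ :=
        uncross_step p g hskew hg F hne ht A B hA hB hAB hnd
      obtain ⟨F'', h1, h2, h3, h4⟩ := ih F' (by omega) hne' ht'
      exact ⟨F'', h1, h2, h3, fun v hv hvF => h4 v hv (hcov' v hv hvF)⟩

/-- Benczúr–Frank: the total value of a minimal transversal of a nonnegative symmetric
skew-supermodular function equals the maximum of `∑_{A ∈ F} p(A)` over subpartitions `F`. -/
theorem minimal_transversal_value {S : Type*} [Fintype S] [DecidableEq S]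
    (p : Finset S → ℤ) (hnn : ∀ A, 0 ≤ p A) (hempty : p ∅ = 0) (hfull : p Finset.univ = 0)
    (hsym : SymmetricFn p) (hskew : SkewSupermodular p)
    (g : S → ℕ) (hg : IsTransversal p g)
    (hmin : ∀ v : S, 1 ≤ g v → ¬ IsTransversal p (Function.update g v (g v - 1))) :
    IsGreatest
      {x : ℤ | ∃ F : Finset (Finset S), (∀ A ∈ F, A.Nonempty) ∧
        ((F : Set (Finset S)).Pairwise fun A B => Disjoint A B) ∧ x = ∑ A ∈ F, p A}
      (∑ v : S, (g v : ℤ)) := by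
  classical
  constructor
  · -- membership: construct a subpartition of tight sets
    -- Step 1: for each v with g v ≥ 1, there is a tight set containing v
    have htight : ∀ v : S, 1 ≤ g v → ∃ A : Finset S, v ∈ A ∧ p A = ∑ u ∈ A, (g u : ℤ) := by
      intro v hv
      have := hmin v hv
      simp only [IsTransversal, not_forall, not_le] at this
      obtain ⟨A, hAlt⟩ := this
      have hvA : v ∈ A := by
        by_contra hvA
        have : ∑ u ∈ A, ((Function.update g v (g v - 1) u : ℕ) : ℤ)
            = ∑ u ∈ A, (g u : ℤ) := by
          apply Finset.sum_congr rfl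
          intro u hu
          rw [Function.update_of_ne (ne_of_mem_of_not_mem hu hvA)]
        rw [this] at hAlt
        exact absurd hAlt (not_lt.2 (hg A))
      refine ⟨A, hvA, le_antisymm (hg A) ?_⟩
      have hsplit : ∑ u ∈ A, ((Function.update g v (g v - 1) u : ℕ) : ℤ)
          = (∑ u ∈ A, (g u : ℤ)) - 1 := by
        rw [← Finset.sum_erase_add A _ hvA, ← Finset.sum_erase_add A (fun u => (g u : ℤ)) hvA]
        have h1 : ∑ u ∈ A.erase v, ((Function.update g v (g v - 1) u : ℕ) : ℤ)
            = ∑ u ∈ A.erase v, (g u : ℤ) := by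
          apply Finset.sum_congr rfl
          intro u hu
          rw [Function.update_of_ne (Finset.ne_of_mem_erase hu)]
        rw [h1, Function.update_self, Nat.cast_sub hv]
        push_cast
        ring
      rw [hsplit] at hAlt
      omega
    -- Step 2: build initial family
    set supp := Finset.univ.filter (fun v => 0 < g v) with hsupp
    set T : S → Finset S := fun v =>
      if h : 1 ≤ g v then (htight v h).choose else ∅ with hT
    have hTmem : ∀ v ∈ supp, v ∈ T v := by
      intro v hv
      have hv1 : 1 ≤ g v := (Finset.mem_filter.mp hv).2
      simp only [hT, dif_pos hv1]
      exact (htight v hv1).choose_spec.1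
    have hTtight : ∀ v ∈ supp, p (T v) = ∑ u ∈ T v, (g u : ℤ) := by
      intro v hv
      have hv1 : 1 ≤ g v := (Finset.mem_filter.mp hv).2
      simp only [hT, dif_pos hv1]
      exact (htight v hv1).choose_spec.2
    set F₀ := supp.image T with hF₀
    have hne₀ : ∀ C ∈ F₀, C.Nonempty := by
      intro C hC
      obtain ⟨v, hv, rfl⟩ := Finset.mem_image.mp hC
      exact ⟨v, hTmem v hv⟩
    have ht₀ : ∀ C ∈ F₀, p C = ∑ u ∈ C, (g u : ℤ) := by
      intro C hC
      obtain ⟨v, hv, rfl⟩ := Finset.mem_image.mp hC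
      exact hTtight v hv
    obtain ⟨F', hne', ht', hdisj', hcov'⟩ :=
      exists_disjoint_family p g hskew hg (∑ C ∈ F₀, C.card) F₀ le_rfl hne₀ ht₀
    refine ⟨F', hne', hdisj', ?_⟩
    have hcov : ∀ v : S, 0 < g v → v ∈ F'.biUnion id := by
      intro v hv
      apply hcov' v hv
      exact Finset.mem_biUnion.mpr ⟨T v, Finset.mem_image.mpr
        ⟨v, Finset.mem_filter.2 ⟨Finset.mem_univ v, hv⟩, rfl⟩,
        hTmem v (Finset.mem_filter.2 ⟨Finset.mem_univ v, hv⟩)⟩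
    have hpd : (↑F' : Set (Finset S)).PairwiseDisjoint (id : Finset S → Finset S) := hdisj'
    have hsum : ∑ A ∈ F', p A = ∑ v ∈ F'.biUnion id, (g v : ℤ) := by
      rw [Finset.sum_biUnion hpd]
      exact Finset.sum_congr rfl fun C hC => ht' C hC
    rw [hsum]
    symm
    apply Finset.sum_subset (Finset.subset_univ _)
    intro x _ hx
    by_contra hgx
    have : 0 < g x := by
      rcases Nat.eq_zero_or_pos (g x) with h | h
      · exact absurd (by exact_mod_cast h : ((g x : ℤ) = 0)) hgx
      · exact h
    exact hx (hcov x this)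
  · -- upper bound
    rintro x ⟨F, hne, hdisj, rfl⟩
    calc ∑ A ∈ F, p A ≤ ∑ A ∈ F, ∑ v ∈ A, (g v : ℤ) :=
          Finset.sum_le_sum fun A _ => hg A
      _ = ∑ v ∈ F.biUnion id, (g v : ℤ) :=
          (Finset.sum_biUnion (show (↑F : Set (Finset S)).PairwiseDisjoint
            (id : Finset S → Finset S) from hdisj)).symm
      _ ≤ ∑ v : S, (g v : ℤ) :=
          Finset.sum_le_sum_of_subset_of_nonneg (Finset.subset_univ _)
            (fun v _ _ => Int.natCast_nonneg _)
end
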